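/- The set scoring function F is monotonically non-decreasing on sets of cardinality at most M: if A ⊆ B ⊆ V are finite subsets with |B| ≤ M, then F(A) ≤ F(B). -/

import Mathlib

/-- **Monotonicity of the set scoring function on sets of size at most `M`.**
With nonnegative leverage scores `ℓ`, a symmetric kernel `K` with values in
`[0,1]`, `0 ≤ α ≤ 1`, `M > 0` and
`F S = ∑_{i ∈ S} (ℓ i + 1) - (α/M) · ∑_{unordered pairs {i,j} ⊆ S, i ≠ j} K i j`
(the unordered-pair sum written as half the ordered off-diagonal sum, which
agrees since `K` is symmetric): if `A ⊆ B ⊆ V` and `|B| ≤ M`, then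
`F A ≤ F B`. -/
theorem setScore_monotone {V : Type*} [Fintype V] [DecidableEq V]
    (ℓ : V → ℝ) (hℓ : ∀ i, 0 ≤ ℓ i) (K : V → V → ℝ)
    (hKsymm : ∀ i j, K i j = K j i)
    (hK0 : ∀ i j, 0 ≤ K i j) (hK1 : ∀ i j, K i j ≤ 1)
    (α M : ℝ) (hα0 : 0 ≤ α) (hα1 : α ≤ 1) (hM : 0 < M)
    (F : Finset V → ℝ)
    (hF : ∀ S : Finset V,
      F S = (∑ i ∈ S, (ℓ i + 1)) - (α / M) * ((∑ p ∈ S.offDiag, K p.1 p.2) / 2))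
    (A B : Finset V) (hAB : A ⊆ B) (hB : (B.card : ℝ) ≤ M) :
    F A ≤ F B := by
  classical
  have hsub : A.offDiag ⊆ B.offDiag := by
    intro p hp
    simp only [Finset.mem_offDiag] at *
    exact ⟨hAB hp.1, hAB hp.2.1, hp.2.2⟩
  have hcard : A.card ≤ B.card := Finset.card_le_card hAB
  set a := A.card with ha
  set b := B.card with hb'
  have h1 : ∑ i ∈ B, (ℓ i + 1) = ∑ i ∈ A, (ℓ i + 1) + ∑ i ∈ B \ A, (ℓ i + 1) := by
    rw [add_comm, Finset.sum_sdiff hAB]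
  have h2 : ∑ p ∈ B.offDiag, K p.1 p.2
      = ∑ p ∈ A.offDiag, K p.1 p.2 + ∑ p ∈ B.offDiag \ A.offDiag, K p.1 p.2 := by
    rw [add_comm, Finset.sum_sdiff hsub]
  -- D : lower bound on the added leverage mass
  have hD : ((b : ℝ) - a) ≤ ∑ i ∈ B \ A, (ℓ i + 1) := by
    have : ∑ i ∈ B \ A, (1 : ℝ) ≤ ∑ i ∈ B \ A, (ℓ i + 1) :=
      Finset.sum_le_sum (fun i _ => by linarith [hℓ i])
    have hc : ((B \ A).card : ℝ) = (b : ℝ) - a := by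
      rw [Finset.card_sdiff_of_subset hAB]
      rw [← ha, ← hb']
      push_cast [Nat.cast_sub hcard]
      ring
    simpa [hc] using this
  -- upper bound on the added kernel sum
  have hSd0 : 0 ≤ ∑ p ∈ B.offDiag \ A.offDiag, K p.1 p.2 :=
    Finset.sum_nonneg (fun p _ => hK0 p.1 p.2)
  have hSd : ∑ p ∈ B.offDiag \ A.offDiag, K p.1 p.2
      ≤ ((b : ℝ) - a) * ((b : ℝ) + a) := by
    have h3 : ∑ p ∈ B.offDiag \ A.offDiag, K p.1 p.2
        ≤ ((B.offDiag \ A.offDiag).card : ℝ) := by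
      calc ∑ p ∈ B.offDiag \ A.offDiag, K p.1 p.2
          ≤ ∑ p ∈ B.offDiag \ A.offDiag, (1 : ℝ) :=
            Finset.sum_le_sum (fun p _ => hK1 p.1 p.2)
        _ = ((B.offDiag \ A.offDiag).card : ℝ) := by simp
    have h5 : ∀ s : Finset V, ((s.offDiag.card : ℝ)) = (s.card : ℝ) * s.card - s.card := by
      intro s
      have hs : s.card ≤ s.card * s.card := by nlinarith [s.card.zero_le]
      rw [Finset.offDiag_card, Nat.cast_sub hs]
      push_cast; ring
    have h4 : ((B.offDiag \ A.offDiag).card : ℝ) ≤ (b : ℝ) * b - a * a := by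
      rw [Finset.card_sdiff_of_subset hsub, Nat.cast_sub (Finset.card_le_card hsub), h5, h5]
      have hab2 : (a : ℝ) ≤ b := by exact_mod_cast hcard
      nlinarith
    nlinarith
  have hab : (a : ℝ) ≤ b := by exact_mod_cast hcard
  have key : (α / M) * ((∑ p ∈ B.offDiag \ A.offDiag, K p.1 p.2) / 2)
      ≤ ∑ i ∈ B \ A, (ℓ i + 1) := by
    rw [div_mul_eq_mul_div, div_le_iff₀ hM]
    have hba : (b : ℝ) + a ≤ 2 * M := by linarith
    have hαS : α * ((∑ p ∈ B.offDiag \ A.offDiag, K p.1 p.2) / 2)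
        ≤ ((b : ℝ) - a) * ((b : ℝ) + a) / 2 := by
      nlinarith
    nlinarith [mul_le_mul_of_nonneg_left hba (show (0:ℝ) ≤ (b : ℝ) - a by linarith),
      mul_le_mul_of_nonneg_right hD (le_of_lt hM)]
  rw [hF A, hF B, h1, h2]
  have expand : (α / M) * ((∑ p ∈ A.offDiag, K p.1 p.2
        + ∑ p ∈ B.offDiag \ A.offDiag, K p.1 p.2) / 2)
      = (α / M) * ((∑ p ∈ A.offDiag, K p.1 p.2) / 2)
        + (α / M) * ((∑ p ∈ B.offDiag \ A.offDiag, K p.1 p.2) / 2) := by ring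
  rw [expand]
  linarith
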